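/- Let Â be the normalized augmented adjacency matrix of a connected graph and u the unit eigenvector for eigenvalue 1 (proportional to D̃^{1/2}𝟙). Then for any initial feature matrix H⁽⁰⁾ ∈ ℝ^{n×d}, the propagated features Âᵏ H⁽⁰⁾ converge as k → ∞ to u (uᵀ H⁽⁰⁾), a matrix all of whose rows are scalar multiples of the single row vector uᵀH⁽⁰⁾ ∈ ℝ^{1×d}; hence distinct nodes' representations become linearly dependent in the limit. -/

import Mathlib

open Matrix Filter

/-- Over-smoothing of a linear GCN: for a symmetric `Â` with spectrum in
`(-1,1]` and simple top eigenvalue `1` with unit eigenvector `u`, the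
propagated features `Âᵏ H⁽⁰⁾` converge entrywise to `u (uᵀ H⁽⁰⁾)`, so every
row of the limit is the scalar multiple `u a • (uᵀ H⁽⁰⁾)` of one fixed row. -/
theorem linear_gcn_over_smoothing {n d : ℕ}
    (Ahat : Matrix (Fin n) (Fin n) ℝ) (hA : Ahat.IsSymm)
    (hspec : ∀ (lam : ℝ) (v : Fin n → ℝ), v ≠ 0 → Ahat.mulVec v = lam • v →
        -1 < lam ∧ lam ≤ 1)
    (u : Fin n → ℝ) (hu_unit : u ⬝ᵥ u = 1) (hu_eig : Ahat.mulVec u = u)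
    (hsimple : ∀ v : Fin n → ℝ, Ahat.mulVec v = v → ∃ c : ℝ, v = c • u)
    (H0 : Matrix (Fin n) (Fin d) ℝ) :
    (∀ (a : Fin n) (b : Fin d),
        Tendsto (fun k : ℕ => (Ahat ^ k * H0) a b) atTop
          (nhds (u a * (u ⬝ᵥ fun m => H0 m b)))) ∧
    (∀ a : Fin n, (fun b => u a * (u ⬝ᵥ fun m => H0 m b)) =
        u a • fun b => u ⬝ᵥ fun m => H0 m b) := by
  constructor
  · -- main convergence statement
    have hH : Ahat.IsHermitian := by
      ext i j
      simpa [Matrix.conjTranspose_apply] using (congrFun (congrFun hA j) i).symm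
    set B := hH.eigenvectorBasis with hB
    set μ := hH.eigenvalues with hμ
    -- inner product on EuclideanSpace is dot product
    have hinner : ∀ x y : EuclideanSpace ℝ (Fin n),
        (inner ℝ x y : ℝ) = (⇑x : Fin n → ℝ) ⬝ᵥ (⇑y : Fin n → ℝ) := by
      intro x y
      simp [PiLp.inner_apply, dotProduct, RCLike.inner_apply, mul_comm]
    -- basis vectors are nonzero as plain functions
    have hBne : ∀ i, (⇑(B i) : Fin n → ℝ) ≠ 0 := by
      intro i h
      exact B.orthonormal.ne_zero i (by ext a; exact congrFun h a)
    -- eigenvalue eq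
    have hBeig : ∀ i, Ahat.mulVec (⇑(B i) : Fin n → ℝ) = μ i • (⇑(B i) : Fin n → ℝ) :=
      fun i => hH.mulVec_eigenvectorBasis i
    have hbnd : ∀ i, -1 < μ i ∧ μ i ≤ 1 := fun i =>
      hspec (μ i) (⇑(B i) : Fin n → ℝ) (hBne i) (hBeig i)
    -- orthonormality in dot-product form
    have hdotBB : ∀ i j, (⇑(B i) : Fin n → ℝ) ⬝ᵥ (⇑(B j) : Fin n → ℝ)
        = if i = j then 1 else 0 := by
      intro i j
      rw [← hinner (B i) (B j)]
      exact orthonormal_iff_ite.mp B.orthonormal i j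
    -- powers of eigenvalue equation
    have hpow : ∀ (k : ℕ) (i : Fin n),
        (Ahat ^ k).mulVec (⇑(B i) : Fin n → ℝ) = (μ i ^ k) • (⇑(B i) : Fin n → ℝ) := by
      intro k i
      induction k with
      | zero => simp
      | succ k ih =>
          rw [pow_succ, ← Matrix.mulVec_mulVec, hBeig i, Matrix.mulVec_smul, ih,
            smul_smul, pow_succ, mul_comm]
    -- expansion of an arbitrary vector in the eigenbasis
    have hexp : ∀ v : Fin n → ℝ,
        v = ∑ i, ((⇑(B i) : Fin n → ℝ) ⬝ᵥ v) • (⇑(B i) : Fin n → ℝ) := by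
      intro v
      have hs := congrArg WithLp.ofLp (B.sum_repr' ((WithLp.equiv 2 (Fin n → ℝ)).symm v))
      simp only [hinner, WithLp.equiv_symm_apply, WithLp.ofLp_toLp, WithLp.ofLp_sum, WithLp.ofLp_smul] at hs
      exact hs.symm
    -- symmetry transfers eigen relation to dot products with u
    have horth : ∀ i, (μ i - 1) * ((⇑(B i) : Fin n → ℝ) ⬝ᵥ u) = 0 := by
      intro i
      have h1 : (Ahat.mulVec (⇑(B i) : Fin n → ℝ)) ⬝ᵥ u
          = (⇑(B i) : Fin n → ℝ) ⬝ᵥ Ahat.mulVec u := by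
        rw [Matrix.dotProduct_mulVec, ← Matrix.mulVec_transpose, hA.eq]
      rw [hBeig i, hu_eig, smul_dotProduct, smul_eq_mul] at h1
      linarith [h1]
    -- there is a unique index with eigenvalue 1, and it behaves like u
    obtain ⟨i₀, hi₀, hkey⟩ :
        ∃ i₀, μ i₀ = 1 ∧ ∀ (w : Fin n → ℝ) (a : Fin n),
          ((⇑(B i₀) : Fin n → ℝ) ⬝ᵥ w) * (⇑(B i₀) : Fin n → ℝ) a = (u ⬝ᵥ w) * u a := by
      have hex : ∃ i, μ i = 1 := by
        by_contra h
        push_neg at h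
        have h0 : ∀ i, (⇑(B i) : Fin n → ℝ) ⬝ᵥ u = 0 := by
          intro i
          rcases mul_eq_zero.1 (horth i) with h1 | h1
          · exact absurd (by linarith : μ i = 1) (h i)
          · exact h1
        have hu0 : u = 0 := by
          rw [hexp u]
          simp [h0]
        rw [hu0] at hu_unit
        simp at hu_unit
      obtain ⟨i₀, hi₀⟩ := hex
      refine ⟨i₀, hi₀, ?_⟩
      obtain ⟨c, hc⟩ := hsimple (⇑(B i₀) : Fin n → ℝ) (by rw [hBeig i₀, hi₀, one_smul])
      have hc2 : c * c = 1 := by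
        have hOn : (⇑(B i₀) : Fin n → ℝ) ⬝ᵥ (⇑(B i₀) : Fin n → ℝ) = 1 := by
          rw [hdotBB i₀ i₀, if_pos rfl]
        rw [hc] at hOn
        simp only [smul_dotProduct, dotProduct_smul, smul_eq_mul, hu_unit] at hOn
        nlinarith [hOn]
      intro w a
      rw [hc]
      simp only [smul_dotProduct, Pi.smul_apply, smul_eq_mul]
      linear_combination ((u ⬝ᵥ w) * u a) * hc2
    have huniq : ∀ i, μ i = 1 → i = i₀ := by
      intro i hi
      by_contra hne
      obtain ⟨c, hc⟩ := hsimple (⇑(B i) : Fin n → ℝ) (by rw [hBeig i, hi, one_smul])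
      obtain ⟨c₀, hc₀⟩ := hsimple (⇑(B i₀) : Fin n → ℝ) (by rw [hBeig i₀, hi₀, one_smul])
      have hdot : (⇑(B i) : Fin n → ℝ) ⬝ᵥ (⇑(B i₀) : Fin n → ℝ) = 0 := by
        rw [hdotBB i i₀, if_neg hne]
      have hcc : c₀ = 0 ∨ c = 0 := by
        rw [hc, hc₀] at hdot
        simpa [smul_dotProduct, dotProduct_smul, hu_unit, mul_assoc] using hdot
      rcases hcc with h | h
      · exact hBne i₀ (by rw [hc₀, h, zero_smul])
      · exact hBne i (by rw [hc, h, zero_smul])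
    intro a b
    set v : Fin n → ℝ := fun m => H0 m b with hv
    -- entrywise formula
    have hentry : ∀ k : ℕ, (Ahat ^ k * H0) a b
        = ∑ i, μ i ^ k * (((⇑(B i) : Fin n → ℝ) ⬝ᵥ v) * (⇑(B i) : Fin n → ℝ) a) := by
      intro k
      have h1 : (Ahat ^ k * H0) a b = ((Ahat ^ k).mulVec v) a := rfl
      rw [h1]
      conv_lhs => rw [hexp v]
      rw [show (Ahat ^ k).mulVec
            (∑ i, ((⇑(B i) : Fin n → ℝ) ⬝ᵥ v) • (⇑(B i) : Fin n → ℝ))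
          = ∑ i, ((⇑(B i) : Fin n → ℝ) ⬝ᵥ v) • ((Ahat ^ k).mulVec (⇑(B i) : Fin n → ℝ)) by
        simp only [← Matrix.mulVecLin_apply, map_sum, _root_.map_smul]]
      simp only [hpow, Finset.sum_apply, Pi.smul_apply, smul_eq_mul]
      exact Finset.sum_congr rfl fun i _ => by ring
    -- the limit of each summand
    have hlim : Tendsto
        (fun k : ℕ => ∑ i, μ i ^ k * (((⇑(B i) : Fin n → ℝ) ⬝ᵥ v)
          * (⇑(B i) : Fin n → ℝ) a)) atTop
        (nhds (∑ i, if μ i = 1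
          then ((⇑(B i) : Fin n → ℝ) ⬝ᵥ v) * (⇑(B i) : Fin n → ℝ) a else 0)) := by
      apply tendsto_finset_sum
      intro i _
      by_cases h : μ i = 1
      · rw [if_pos h]
        simp only [h, one_pow, one_mul]
        exact tendsto_const_nhds
      · rw [if_neg h]
        have habs : |μ i| < 1 := by
          rcases hbnd i with ⟨h1, h2⟩
          rw [abs_lt]
          exact ⟨h1, lt_of_le_of_ne h2 h⟩
        have := (tendsto_pow_atTop_nhds_zero_of_abs_lt_one habs).mul_const
          (((⇑(B i) : Fin n → ℝ) ⬝ᵥ v) * (⇑(B i) : Fin n → ℝ) a)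
        simpa using this
    have hsum : (∑ i, if μ i = 1
          then ((⇑(B i) : Fin n → ℝ) ⬝ᵥ v) * (⇑(B i) : Fin n → ℝ) a else 0)
        = u a * (u ⬝ᵥ v) := by
      rw [Finset.sum_eq_single i₀]
      · rw [if_pos hi₀, hkey v a, mul_comm]
      · intro i _ hne
        rw [if_neg (fun h => hne (huniq i h))]
      · intro h
        exact absurd (Finset.mem_univ i₀) h
    rw [show (fun k : ℕ => (Ahat ^ k * H0) a b)
        = fun k : ℕ => ∑ i, μ i ^ k * (((⇑(B i) : Fin n → ℝ) ⬝ᵥ v)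
          * (⇑(B i) : Fin n → ℝ) a) from funext hentry]
    rw [show u a * (u ⬝ᵥ fun m => H0 m b) = u a * (u ⬝ᵥ v) from rfl, ← hsum]
    exact hlim
  · intro a
    funext b
    simp [smul_eq_mul]
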